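/- Let K be a number field with ring of integers O_K, and let x ∈ K satisfy (x² + A₁ − A₂)² = 4A₁x² for some A₁, A₂ ∈ O_K with A₁ ≠ A₂. Then x ∈ O_K, x ≠ 0, y := (A₁−A₂)/x ∈ O_K, (x+y)/2 ∈ O_K, A₁ = ((x+y)/2)², and A₂ = ((x+y)/2 − y)². In particular A₁ and A₂ are squares in O_K. -/

import Mathlib

open NumberField

/-- Reverse direction of the relation-combining lemma: let `K` be a number field
with ring of integers `𝓞 K`, and let `x ∈ K` satisfy `(x² + A₁ − A₂)² = 4A₁x²`
for some `A₁, A₂ ∈ 𝓞 K` with `A₁ ≠ A₂`. Then `x ∈ 𝓞 K`, `x ≠ 0`,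
`y := (A₁−A₂)/x ∈ 𝓞 K`, `(x+y)/2 ∈ 𝓞 K`, `A₁ = ((x+y)/2)²` and
`A₂ = ((x+y)/2 − y)²`; in particular `A₁` and `A₂` are squares in `𝓞 K`. -/
theorem relation_combining_reverse (K : Type*) [Field K] [NumberField K]
    (A₁ A₂ : 𝓞 K) (hA : A₁ ≠ A₂) (x : K)
    (hx : (x ^ 2 + (A₁ : K) - (A₂ : K)) ^ 2 = 4 * (A₁ : K) * x ^ 2) :
    (∃ x' : 𝓞 K, (x' : K) = x) ∧ x ≠ 0 ∧
    (∃ y' : 𝓞 K, (y' : K) = ((A₁ : K) - (A₂ : K)) / x) ∧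
    (∃ w : 𝓞 K, (w : K) = (x + ((A₁ : K) - (A₂ : K)) / x) / 2 ∧
      (A₁ : K) = (w : K) ^ 2 ∧
      (A₂ : K) = ((w : K) - ((A₁ : K) - (A₂ : K)) / x) ^ 2) ∧
    (∃ a : 𝓞 K, A₁ = a ^ 2) ∧ (∃ a : 𝓞 K, A₂ = a ^ 2) := by
  have hD : (A₁ : K) - (A₂ : K) ≠ 0 := by
    intro h
    exact hA (RingOfIntegers.ext (sub_eq_zero.mp h))
  have hx0 : x ≠ 0 := by
    intro h
    subst h
    apply hD
    have : ((A₁ : K) - (A₂ : K)) ^ 2 = 0 := by linear_combination hx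
    exact pow_eq_zero_iff (by norm_num) |>.mp this
  set D : K := (A₁ : K) - (A₂ : K) with hDdef
  set w : K := (x + D / x) / 2 with hwdef
  have hw2 : w ^ 2 = (A₁ : K) := by
    rw [hwdef, hDdef]
    field_simp
    ring_nf
    ring_nf at hx
    linear_combination hx
  have hv2 : (w - D / x) ^ 2 = (A₂ : K) := by
    rw [hwdef, hDdef]
    field_simp
    ring_nf
    ring_nf at hx
    linear_combination hx
  have hwint : IsIntegral ℤ w := by
    refine IsIntegral.of_pow (n := 2) (by norm_num) ?_
    rw [hw2]
    exact A₁.2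
  have hvint : IsIntegral ℤ (w - D / x) := by
    refine IsIntegral.of_pow (n := 2) (by norm_num) ?_
    rw [hv2]
    exact A₂.2
  set W : 𝓞 K := ⟨w, hwint⟩ with hW
  set V : 𝓞 K := ⟨w - D / x, hvint⟩ with hV
  have hWc : (W : K) = w := rfl
  have hVc : (V : K) = w - D / x := rfl
  have hx' : ((W + V : 𝓞 K) : K) = x := by
    push_cast [hWc, hVc, hwdef]
    field_simp
    ring
  have hy' : ((W - V : 𝓞 K) : K) = D / x := by
    push_cast [hWc, hVc]; ring
  refine ⟨⟨W + V, hx'⟩, hx0, ⟨W - V, hy'⟩, ⟨W, hWc, hw2.symm, by rw [hWc, hv2]⟩,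
    ⟨W, RingOfIntegers.ext (by push_cast [hWc]; exact hw2.symm)⟩,
    ⟨V, RingOfIntegers.ext (by push_cast [hVc]; exact hv2.symm)⟩⟩
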